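/- For N = 3 (so ζ = exp(2πi/3)), there exist a, b : ZMod 3 → ℕ such that: (i) Σ_r a(r) = Σ_r b(r); (ii) |χ_a(g)| = |χ_b(g)| for every g : ZMod 3; (iii) χ_a(g)^2 = χ_b(g)^2 for every g : ZMod 3 (so the character of the tensor square of the representation encoded by a equals that of the tensor square of the representation encoded by b); (iv) a and b do not differ by a 1-dimensional twist, i.e., there is no s : ZMod 3 with a(r) = b(r − s) for all r; and (v) χ_a(1)^3 ≠ χ_b(1)^3, so the refined index distinguishes them. (The unrefined symmetry-protected indices, built from absolute values of characters, are not complete invariants.) -/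

import Mathlib

/-- The character of the `ZMod N`-representation with multiplicity function `a`,
evaluated at the group element `g`: `χ_a(g) = ∑ r, a r * ζ^{(r*g).val}` where
`ζ = exp(2πi/N)`. -/
noncomputable def chiChar (N : ℕ) [NeZero N] (a : ZMod N → ℕ) (g : ZMod N) : ℂ :=
  ∑ r : ZMod N, (a r : ℂ) * Complex.exp (2 * Real.pi * Complex.I / N) ^ ((r * g).val)

private lemma sum3 {M : Type*} [AddCommMonoid M] (f : ZMod 3 → M) :
    ∑ r : ZMod 3, f r = f 0 + f 1 + f 2 := by
  show ∑ r : Fin 3, f r = _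
  exact Fin.sum_univ_three f

/-- the unrefined SPIs (absolute values of characters) are not complete
invariants for `ℤ₃`: there exist multiplicity functions `a, b : ZMod 3 → ℕ` with equal
total dimension, equal `|χ(g)|` for all `g`, and equal tensor-square characters
`χ(g)²`, which do not differ by a 1-dimensional twist, and which the refined index
`χ(1)³` distinguishes. -/
theorem unrefined_spi_incomplete_three :
    ∃ a b : ZMod 3 → ℕ,
      (∑ r : ZMod 3, a r = ∑ r : ZMod 3, b r) ∧
      (∀ g : ZMod 3, ‖chiChar 3 a g‖ = ‖chiChar 3 b g‖) ∧
      (∀ g : ZMod 3, chiChar 3 a g ^ 2 = chiChar 3 b g ^ 2) ∧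
      (¬ ∃ s : ZMod 3, ∀ r : ZMod 3, a r = b (r - s)) ∧
      chiChar 3 a 1 ^ 3 ≠ chiChar 3 b 1 ^ 3 := by
  set z : ℂ := Complex.exp (2 * Real.pi * Complex.I / 3) with hz
  have hprim : IsPrimitiveRoot z 3 := by
    have := Complex.isPrimitiveRoot_exp 3 (by norm_num)
    simpa [hz] using this
  have hne : z ≠ 1 := hprim.ne_one (by norm_num)
  have h3 : z ^ 3 = 1 := hprim.pow_eq_one
  have hquad : z ^ 2 = -1 - z := by
    have hfac : (z - 1) * (z ^ 2 + z + 1) = 0 := by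
      have : (z - 1) * (z ^ 2 + z + 1) = z ^ 3 - 1 := by ring
      rw [this, h3]; ring
    have h2 : z ^ 2 + z + 1 = 0 :=
      (mul_eq_zero.mp hfac).resolve_left (sub_ne_zero.mpr hne)
    linear_combination h2
  set a : ZMod 3 → ℕ := fun r => if r = 0 then 0 else if r = 1 then 2 else 1 with ha
  set b : ZMod 3 → ℕ := fun r => if r = 0 then 2 else if r = 1 then 0 else 1 with hb
  have e10 : (1 : ZMod 3) ≠ 0 := by decide
  have e20 : (2 : ZMod 3) ≠ 0 := by decide
  have e21 : (2 : ZMod 3) ≠ 1 := by decide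
  have ca0 : chiChar 3 a 0 = 3 := by
    unfold chiChar
    rw [sum3]
    simp only [ha, if_pos rfl, if_true, if_neg e10, if_neg e20, if_neg e21, Nat.cast_ofNat,
      Nat.cast_zero, Nat.cast_one, show ((0 : ZMod 3) * 0).val = 0 from rfl,
      show ((1 : ZMod 3) * 0).val = 0 from rfl, show ((2 : ZMod 3) * 0).val = 0 from rfl]
    ring
  have cb0 : chiChar 3 b 0 = 3 := by
    unfold chiChar
    rw [sum3]
    simp only [hb, if_pos rfl, if_true, if_neg e10, if_neg e20, if_neg e21, Nat.cast_ofNat,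
      Nat.cast_zero, Nat.cast_one, show ((0 : ZMod 3) * 0).val = 0 from rfl,
      show ((1 : ZMod 3) * 0).val = 0 from rfl, show ((2 : ZMod 3) * 0).val = 0 from rfl]
    ring
  have ca1 : chiChar 3 a 1 = z - 1 := by
    unfold chiChar
    rw [sum3]
    simp only [ha, if_pos rfl, if_true, if_neg e10, if_neg e20, if_neg e21, Nat.cast_ofNat,
      Nat.cast_zero, Nat.cast_one, ← hz, show ((0 : ZMod 3) * 1).val = 0 from rfl,
      show ((1 : ZMod 3) * 1).val = 1 from rfl, show ((2 : ZMod 3) * 1).val = 2 from rfl]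
    linear_combination hquad
  have cb1 : chiChar 3 b 1 = 1 - z := by
    unfold chiChar
    rw [sum3]
    simp only [hb, if_pos rfl, if_true, if_neg e10, if_neg e20, if_neg e21, Nat.cast_ofNat,
      Nat.cast_zero, Nat.cast_one, ← hz, show ((0 : ZMod 3) * 1).val = 0 from rfl,
      show ((1 : ZMod 3) * 1).val = 1 from rfl, show ((2 : ZMod 3) * 1).val = 2 from rfl]
    linear_combination hquad
  have ca2 : chiChar 3 a 2 = -2 - z := by
    unfold chiChar
    rw [sum3]
    simp only [ha, if_pos rfl, if_true, if_neg e10, if_neg e20, if_neg e21, Nat.cast_ofNat,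
      Nat.cast_zero, Nat.cast_one, ← hz, show ((0 : ZMod 3) * 2).val = 0 from rfl,
      show ((1 : ZMod 3) * 2).val = 2 from rfl, show ((2 : ZMod 3) * 2).val = 1 from rfl]
    linear_combination (2 : ℂ) * hquad
  have cb2 : chiChar 3 b 2 = 2 + z := by
    unfold chiChar
    rw [sum3]
    simp only [hb, if_pos rfl, if_true, if_neg e10, if_neg e20, if_neg e21, Nat.cast_ofNat,
      Nat.cast_zero, Nat.cast_one, ← hz, show ((0 : ZMod 3) * 2).val = 0 from rfl,
      show ((1 : ZMod 3) * 2).val = 2 from rfl, show ((2 : ZMod 3) * 2).val = 1 from rfl]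
    ring
  refine ⟨a, b, ?_, ?_, ?_, ?_, ?_⟩
  · rw [sum3, sum3]
    simp [ha, hb, if_neg e10, if_neg e20, if_neg e21]
  · intro g
    fin_cases g
    · show ‖chiChar 3 a 0‖ = ‖chiChar 3 b 0‖; rw [ca0, cb0]
    · show ‖chiChar 3 a 1‖ = ‖chiChar 3 b 1‖
      rw [ca1, cb1, show (1 : ℂ) - z = -(z - 1) by ring, norm_neg]
    · show ‖chiChar 3 a 2‖ = ‖chiChar 3 b 2‖
      rw [ca2, cb2, show (-2 : ℂ) - z = -(2 + z) by ring, norm_neg]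
  · intro g
    fin_cases g
    · show chiChar 3 a 0 ^ 2 = chiChar 3 b 0 ^ 2; rw [ca0, cb0]
    · show chiChar 3 a 1 ^ 2 = chiChar 3 b 1 ^ 2; rw [ca1, cb1]; ring
    · show chiChar 3 a 2 ^ 2 = chiChar 3 b 2 ^ 2; rw [ca2, cb2]; ring
  · rintro ⟨s, hs⟩
    have h0 := hs 0
    have h1 := hs 1
    simp only [ha, hb] at h0 h1
    fin_cases s <;> revert h0 h1 <;> decide
  · rw [ca1, cb1]
    intro h
    apply hne
    have hcube : (z - 1) ^ 3 = 0 := by linear_combination h / 2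
    have : z - 1 = 0 := by
      exact pow_eq_zero_iff (by norm_num) |>.mp hcube
    linear_combination this
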